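/- For graphs without node attributes and the graph GOSPA pseudometric d̃^{(c,ε)} computed by minimizing over the binary assignment matrices 𝒲_{X,Y}, the function ρ̃^{(c,ε)}([X],[Y]) := d̃^{(c,ε)}(X,Y) on the quotient of the space of graphs by graph isomorphism is well defined (independent of the choice of representatives X ∈ [X] and Y ∈ [Y]) and is a metric on this quotient space: it satisfies identity, symmetry and the triangle inequality, where ρ̃^{(c,ε)}([X],[Y]) = 0 iff [X] = [Y]. -/

import Mathlib

open scoped BigOperators Matrix

namespace GraphGOSPA

/-- An undirected unweighted graph without node attributes: a number of nodes
together with a symmetric `{0,1}`-valued adjacency matrix with zero diagonal. -/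
structure GraphNA where
  n : ℕ
  A : Matrix (Fin n) (Fin n) ℝ
  A_symm : A.IsSymm
  A_01 : ∀ i j, A i j = 0 ∨ A i j = 1
  A_diag : ∀ i, A i i = 0

/-- Componentwise 1-norm of a matrix. -/
def onorm {m n : ℕ} (M : Matrix (Fin m) (Fin n) ℝ) : ℝ :=
  ∑ i, ∑ j, |M i j|

/-- The top-left `m × n` block of an `(m+1) × (n+1)` matrix. -/
def topLeft {m n : ℕ} (W : Matrix (Fin (m+1)) (Fin (n+1)) ℝ) :
    Matrix (Fin m) (Fin n) ℝ :=
  fun i j => W i.castSucc j.castSucc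

/-- The set `𝒲_{X,Y}` of binary assignment matrices: entries in `{0,1}`,
each of the first `nY` columns sums to 1, each of the first `nX` rows sums to 1,
and the bottom-right corner is 0. -/
def Wset (nX nY : ℕ) : Set (Matrix (Fin (nX+1)) (Fin (nY+1)) ℝ) :=
  {W | (∀ i j, W i j = 0 ∨ W i j = 1) ∧
    (∀ j : Fin nY, ∑ i, W i j.castSucc = 1) ∧
    (∀ i : Fin nX, ∑ j, W i.castSucc j = 1) ∧
    W (Fin.last nX) (Fin.last nY) = 0}

/-- The relaxed set `𝒲̄_{X,Y}`: nonnegative entries, with the same row/column sum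
constraints and zero bottom-right corner. -/
def WbarSet (nX nY : ℕ) : Set (Matrix (Fin (nX+1)) (Fin (nY+1)) ℝ) :=
  {W | (∀ i j, 0 ≤ W i j) ∧
    (∀ j : Fin nY, ∑ i, W i j.castSucc = 1) ∧
    (∀ i : Fin nX, ∑ j, W i.castSucc j = 1) ∧
    W (Fin.last nX) (Fin.last nY) = 0}

/-- The edge mismatch cost `e_{X,Y}(W)^p = (ε^p/2)‖A_X W' − W' A_Y‖`. -/
noncomputable def edgeCost (p ε : ℝ) (X Y : GraphNA)
    (W : Matrix (Fin (X.n+1)) (Fin (Y.n+1)) ℝ) : ℝ :=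
  ε ^ p / 2 * onorm (X.A * topLeft W - topLeft W * Y.A)

/-- The unassignment cost `(c^p/2)(Σ_i W(i, n_Y+1) + Σ_j W(n_X+1, j))`. -/
noncomputable def missFalseCost (p c : ℝ) (X Y : GraphNA)
    (W : Matrix (Fin (X.n+1)) (Fin (Y.n+1)) ℝ) : ℝ :=
  c ^ p / 2 * ((∑ i : Fin X.n, W i.castSucc (Fin.last Y.n)) +
    (∑ j : Fin Y.n, W (Fin.last X.n) j.castSucc))

/-- The graph GOSPA pseudometric `d̃^{(c,ε)}` for graphs without node attributes,
computed by minimizing over the binary assignment matrices `𝒲_{X,Y}`. -/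
noncomputable def dtilde (p c ε : ℝ) (X Y : GraphNA) : ℝ :=
  sInf {v | ∃ W ∈ Wset X.n Y.n,
    v = missFalseCost p c X Y W + edgeCost p ε X Y W} ^ (1 / p)

/-- A permutation matrix: a `{0,1}`-valued square matrix whose rows and columns
each sum to 1. -/
def IsPermMatrix {n : ℕ} (P : Matrix (Fin n) (Fin n) ℝ) : Prop :=
  (∀ i j, P i j = 0 ∨ P i j = 1) ∧
    (∀ i, ∑ j, P i j = 1) ∧ (∀ j, ∑ i, P i j = 1)

/-- Two graphs without node attributes are isomorphic if they have the same number of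
nodes and there is a permutation matrix `P` with `A_X P = P A_Y`. -/
def Isomorphic (X Y : GraphNA) : Prop :=
  ∃ h : X.n = Y.n, ∃ P : Matrix (Fin X.n) (Fin X.n) ℝ, IsPermMatrix P ∧
    X.A * P = P * (Y.A.submatrix (Fin.cast h) (Fin.cast h))

section Helpers

open Finset

lemma onorm_nonneg {m n : ℕ} (M : Matrix (Fin m) (Fin n) ℝ) : 0 ≤ onorm M :=
  Finset.sum_nonneg fun _ _ => Finset.sum_nonneg fun _ _ => abs_nonneg _

lemma onorm_eq_zero {m n : ℕ} {M : Matrix (Fin m) (Fin n) ℝ} (h : onorm M = 0) :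
    M = 0 := by
  have h1 : ∀ i ∈ Finset.univ, ∀ j ∈ Finset.univ, |M i j| = 0 := by
    intro i _
    have := (Finset.sum_eq_zero_iff_of_nonneg
      (fun i _ => Finset.sum_nonneg fun j _ => abs_nonneg (M i j))).1 h i (Finset.mem_univ i)
    intro j _
    exact (Finset.sum_eq_zero_iff_of_nonneg (fun j _ => abs_nonneg (M i j))).1 this j
      (Finset.mem_univ j)
  ext i j
  simpa using abs_eq_zero.1 (h1 i (Finset.mem_univ i) j (Finset.mem_univ j))

lemma onorm_add_le {m n : ℕ} (M N : Matrix (Fin m) (Fin n) ℝ) :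
    onorm (M + N) ≤ onorm M + onorm N := by
  unfold onorm
  rw [← Finset.sum_add_distrib]
  refine Finset.sum_le_sum fun i _ => ?_
  rw [← Finset.sum_add_distrib]
  exact Finset.sum_le_sum fun j _ => abs_add_le _ _

lemma onorm_neg {m n : ℕ} (M : Matrix (Fin m) (Fin n) ℝ) : onorm (-M) = onorm M := by
  unfold onorm; simp

lemma onorm_reindex {m n m' n' : ℕ} (e : Fin m' ≃ Fin m) (f : Fin n' ≃ Fin n)
    (M : Matrix (Fin m) (Fin n) ℝ) :
    onorm (fun i j => M (e i) (f j)) = onorm M := by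
  unfold onorm
  refine Fintype.sum_equiv e _ _ fun i => ?_
  exact Fintype.sum_equiv f _ _ fun j => rfl

lemma onorm_transpose {m n : ℕ} (M : Matrix (Fin m) (Fin n) ℝ) :
    onorm Mᵀ = onorm M := by
  unfold onorm
  rw [Finset.sum_comm]
  rfl

lemma onorm_mul_le_right {m k n : ℕ} (M : Matrix (Fin m) (Fin k) ℝ)
    (N : Matrix (Fin k) (Fin n) ℝ) (hN : ∀ i j, 0 ≤ N i j)
    (hrow : ∀ i, ∑ j, N i j ≤ 1) : onorm (M * N) ≤ onorm M := by
  unfold onorm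
  refine Finset.sum_le_sum fun i _ => ?_
  calc ∑ j, |(M * N) i j| ≤ ∑ j, ∑ l, |M i l| * N l j := by
        refine Finset.sum_le_sum fun j _ => ?_
        rw [Matrix.mul_apply]
        refine (Finset.abs_sum_le_sum_abs _ _).trans ?_
        refine Finset.sum_le_sum fun l _ => ?_
        rw [abs_mul, abs_of_nonneg (hN l j)]
    _ = ∑ l, |M i l| * ∑ j, N l j := by
        rw [Finset.sum_comm]; simp [Finset.mul_sum]
    _ ≤ ∑ l, |M i l| * 1 := by
        refine Finset.sum_le_sum fun l _ => ?_
        exact mul_le_mul_of_nonneg_left (hrow l) (abs_nonneg _)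
    _ = ∑ l, |M i l| := by simp

lemma onorm_mul_le_left {m k n : ℕ} (N : Matrix (Fin m) (Fin k) ℝ)
    (M : Matrix (Fin k) (Fin n) ℝ) (hN : ∀ i j, 0 ≤ N i j)
    (hcol : ∀ j, ∑ i, N i j ≤ 1) : onorm (N * M) ≤ onorm M := by
  have := onorm_mul_le_right Mᵀ Nᵀ (fun i j => hN j i) hcol
  rwa [← Matrix.transpose_mul, onorm_transpose, onorm_transpose] at this

end Helpers
section Binary

/-- A `{0,1}` vector summing to 1 has exactly one entry equal to 1. -/
lemma binary_row {m : ℕ} {f : Fin m → ℝ} (h01 : ∀ k, f k = 0 ∨ f k = 1)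
    (hsum : ∑ k, f k = 1) :
    ∃ k₀, f k₀ = 1 ∧ ∀ k, k ≠ k₀ → f k = 0 := by
  have hex : ∃ k₀, f k₀ = 1 := by
    by_contra h
    push_neg at h
    have : ∀ k ∈ Finset.univ, f k = 0 := fun k _ => (h01 k).resolve_right (h k)
    rw [Finset.sum_eq_zero this] at hsum
    norm_num at hsum
  obtain ⟨k₀, hk₀⟩ := hex
  refine ⟨k₀, hk₀, fun k hk => ?_⟩
  rcases h01 k with h0 | h1
  · exact h0
  · exfalso
    have hsub : ({k, k₀} : Finset (Fin m)) ⊆ Finset.univ := Finset.subset_univ _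
    have h2 : (2 : ℝ) ≤ ∑ l, f l := by
      have := Finset.sum_le_sum_of_subset_of_nonneg (f := f) hsub
        (fun l _ _ => by rcases h01 l with h | h <;> rw [h] <;> norm_num)
      rw [Finset.sum_pair hk, h1, hk₀] at this
      linarith
    rw [hsum] at h2; norm_num at h2

/-- A rectangular `{0,1}` matrix with all row and column sums 1 comes from a
bijection. -/
lemma exists_equiv_of_doubly {m n : ℕ} {M : Matrix (Fin m) (Fin n) ℝ}
    (h01 : ∀ i j, M i j = 0 ∨ M i j = 1)
    (hrow : ∀ i, ∑ j, M i j = 1) (hcol : ∀ j, ∑ i, M i j = 1) :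
    ∃ g : Fin m ≃ Fin n, ∀ i j, M i j = if g i = j then 1 else 0 := by
  have hr : ∀ i, ∃ j₀, M i j₀ = 1 ∧ ∀ j, j ≠ j₀ → M i j = 0 :=
    fun i => binary_row (h01 i) (hrow i)
  choose f hf1 hf0 using hr
  have hinj : Function.Injective f := by
    intro i i' hii
    by_contra hne
    obtain ⟨k₀, hk1, hk0⟩ := binary_row (f := fun i => M i (f i'))
      (fun k => h01 k (f i')) (hcol (f i'))
    have hi : M i (f i') = 1 := hii ▸ hf1 i
    have hi' : M i' (f i') = 1 := hf1 i'
    have e1 : i = k₀ := by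
      by_contra h; rw [hk0 i h] at hi; norm_num at hi
    have e2 : i' = k₀ := by
      by_contra h; rw [hk0 i' h] at hi'; norm_num at hi'
    exact hne (e1.trans e2.symm)
  have hmn : m = n := by
    have h1 : (m : ℝ) = ∑ i : Fin m, ∑ j : Fin n, M i j := by simp [hrow]
    have h2 : (n : ℝ) = ∑ i : Fin m, ∑ j : Fin n, M i j := by
      rw [Finset.sum_comm (f := fun (i : Fin m) (j : Fin n) => M i j)]; simp [hcol]
    exact_mod_cast h1.trans h2.symm
  have hbij : Function.Bijective f :=
    (Fintype.bijective_iff_injective_and_card f).2 ⟨hinj, by simp [hmn]⟩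
  refine ⟨Equiv.ofBijective f hbij, fun i j => ?_⟩
  have : Equiv.ofBijective f hbij i = f i := rfl
  rw [this]
  by_cases h : f i = j
  · subst h; simp [hf1 i]
  · rw [if_neg h]
    exact hf0 i j (fun hj => h hj.symm)

/-- Characterization of isomorphism via a relabeling bijection. -/
lemma isomorphic_iff_equiv (X Y : GraphNA) :
    Isomorphic X Y ↔ ∃ g : Fin X.n ≃ Fin Y.n, ∀ i j, X.A i j = Y.A (g i) (g j) := by
  constructor
  · rintro ⟨h, P, ⟨h01, hrow, hcol⟩, hAP⟩
    obtain ⟨σ, hσ⟩ := exists_equiv_of_doubly h01 hrow hcol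
    refine ⟨σ.trans (finCongr h), fun i j => ?_⟩
    have h1 : (X.A * P) i (σ j) = X.A i j := by
      rw [Matrix.mul_apply]
      rw [Finset.sum_eq_single j]
      · rw [hσ, if_pos rfl, mul_one]
      · intro b _ hb
        rw [hσ, if_neg (fun h' => hb (σ.injective h')), mul_zero]
      · simp
    have h2 : (P * Y.A.submatrix (Fin.cast h) (Fin.cast h)) i (σ j)
        = Y.A (Fin.cast h (σ i)) (Fin.cast h (σ j)) := by
      rw [Matrix.mul_apply]
      rw [Finset.sum_eq_single (σ i)]
      · rw [hσ, if_pos rfl, one_mul]; rfl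
      · intro b _ hb
        rw [hσ, if_neg (fun h' => hb h'.symm), zero_mul]
      · simp
    rw [← h1, hAP, h2]
    rfl
  · rintro ⟨g, hg⟩
    have h : X.n = Y.n := by
      have := Fintype.card_congr g; simpa using this
    refine ⟨h, ?_⟩
    set σ : Fin X.n ≃ Fin X.n := g.trans (finCongr h.symm) with hσdef
    refine ⟨fun i j => if σ i = j then 1 else 0, ⟨fun i j => ?_, fun i => ?_, fun j => ?_⟩, ?_⟩
    · by_cases h' : σ i = j <;> simp [h']
    · simp
    · rw [Finset.sum_eq_single (σ.symm j)]
      · simp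
      · intro b _ hb
        simp only []
        rw [if_neg (fun h' : σ b = j => hb (by rw [← h', Equiv.symm_apply_apply]))]
      · simp
    · ext i j
      erw [Matrix.mul_apply, Matrix.mul_apply]
      rw [Finset.sum_eq_single (σ.symm j), Finset.sum_eq_single (σ i)]
      · rw [if_pos rfl, one_mul, if_pos (σ.apply_symm_apply j), mul_one]
        have e1 : Fin.cast h (σ i) = g i := by
          simp [hσdef, finCongr, Fin.cast_cast]
        have e2 : g (σ.symm j) = Fin.cast h j := by
          have : σ (σ.symm j) = j := σ.apply_symm_apply j
          simp only [hσdef] at this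
          have : finCongr h.symm (g (σ.symm j)) = j := this
          have := congrArg (Fin.cast h) this
          simpa using this
        rw [Matrix.submatrix_apply, e1, ← e2]
        exact hg i (σ.symm j)
      · intro b _ hb; rw [if_neg (fun h' => hb h'.symm), zero_mul]
      · simp
      · intro b _ hb
        rw [if_neg, mul_zero]
        intro h'
        exact hb (by rw [← h']; exact (σ.symm_apply_apply b).symm)
      · simp
    
lemma isomorphic_refl (X : GraphNA) : Isomorphic X X :=
  (isomorphic_iff_equiv X X).2 ⟨Equiv.refl _, fun _ _ => rfl⟩

lemma isomorphic_symm {X Y : GraphNA} (h : Isomorphic X Y) : Isomorphic Y X := by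
  rw [isomorphic_iff_equiv] at h ⊢
  obtain ⟨g, hg⟩ := h
  exact ⟨g.symm, fun i j => by rw [hg (g.symm i) (g.symm j)]; simp⟩

end Binary
section CostSet

/-- The set of achievable costs. -/
noncomputable def costSet (p c ε : ℝ) (X Y : GraphNA) : Set ℝ :=
  {v | ∃ W ∈ Wset X.n Y.n, v = missFalseCost p c X Y W + edgeCost p ε X Y W}

lemma dtilde_eq (p c ε : ℝ) (X Y : GraphNA) :
    dtilde p c ε X Y = sInf (costSet p c ε X Y) ^ (1/p) := rfl

lemma Wset_finite (nX nY : ℕ) : (Wset nX nY).Finite := by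
  classical
  have hsub : Wset nX nY ⊆ Set.range (fun (b : Fin (nX+1) → Fin (nY+1) → Bool) =>
      (fun i j => if b i j then (1:ℝ) else 0 : Matrix (Fin (nX+1)) (Fin (nY+1)) ℝ)) := by
    rintro W ⟨h01, -, -, -⟩
    refine ⟨fun i j => if W i j = 1 then true else false, ?_⟩
    ext i j
    rcases h01 i j with h | h <;> simp [h]
  exact Set.Finite.subset (Set.finite_range _) hsub

lemma costSet_finite (p c ε : ℝ) (X Y : GraphNA) : (costSet p c ε X Y).Finite := by
  have : costSet p c ε X Y =
      (fun W => missFalseCost p c X Y W + edgeCost p ε X Y W) '' Wset X.n Y.n := by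
    ext v
    simp only [costSet, Set.mem_setOf_eq, Set.mem_image]
    constructor
    · rintro ⟨W, hW, rfl⟩; exact ⟨W, hW, rfl⟩
    · rintro ⟨W, hW, rfl⟩; exact ⟨W, hW, rfl⟩
  rw [this]
  exact Set.Finite.image _ (Wset_finite _ _)

lemma trivialW_mem (nX nY : ℕ) :
    (fun i j => if (i:ℕ) < nX then (if (j:ℕ) < nY then 0 else 1)
      else (if (j:ℕ) < nY then 1 else 0) : Matrix (Fin (nX+1)) (Fin (nY+1)) ℝ)
      ∈ Wset nX nY := by
  refine ⟨fun i j => ?_, fun j => ?_, fun i => ?_, ?_⟩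
  · by_cases h1 : (i:ℕ) < nX <;> by_cases h2 : (j:ℕ) < nY <;> simp [h1, h2]
  · rw [Fin.sum_univ_castSucc]
    have hj : ((j.castSucc : Fin (nY+1)) : ℕ) < nY := j.isLt
    have hlast : ¬ ((Fin.last nX : Fin (nX+1)) : ℕ) < nX := by simp
    rw [Finset.sum_eq_zero (fun i _ => by
      simp [Fin.is_lt, hj])]
    simp [hlast, hj]
  · rw [Fin.sum_univ_castSucc]
    have hi : ((i.castSucc : Fin (nX+1)) : ℕ) < nX := i.isLt
    rw [Finset.sum_eq_zero (fun j _ => by simp [hi, Fin.is_lt])]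
    simp [hi]
  · simp

lemma costSet_nonempty (p c ε : ℝ) (X Y : GraphNA) : (costSet p c ε X Y).Nonempty :=
  ⟨_, _, trivialW_mem X.n Y.n, rfl⟩

lemma Wset_entry_nonneg {nX nY : ℕ} {W : Matrix (Fin (nX+1)) (Fin (nY+1)) ℝ}
    (hW : W ∈ Wset nX nY) (i : Fin (nX+1)) (j : Fin (nY+1)) : 0 ≤ W i j := by
  rcases hW.1 i j with h | h <;> rw [h] <;> norm_num

lemma cost_nonneg {p c ε : ℝ} (hc : 0 < c) (hε : 0 < ε) {X Y : GraphNA}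
    {W : Matrix (Fin (X.n+1)) (Fin (Y.n+1)) ℝ} (hW : W ∈ Wset X.n Y.n) :
    0 ≤ missFalseCost p c X Y W + edgeCost p ε X Y W := by
  have h1 : 0 ≤ missFalseCost p c X Y W := by
    unfold missFalseCost
    have : (0:ℝ) ≤ c ^ p / 2 := by positivity
    refine mul_nonneg this ?_
    refine add_nonneg (Finset.sum_nonneg fun i _ => Wset_entry_nonneg hW _ _)
      (Finset.sum_nonneg fun j _ => Wset_entry_nonneg hW _ _)
  have h2 : 0 ≤ edgeCost p ε X Y W := by
    unfold edgeCost
    have : (0:ℝ) ≤ ε ^ p / 2 := by positivity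
    exact mul_nonneg this (onorm_nonneg _)
  linarith

lemma sInf_costSet_mem (p c ε : ℝ) (X Y : GraphNA) :
    sInf (costSet p c ε X Y) ∈ costSet p c ε X Y :=
  Set.Nonempty.csInf_mem (costSet_nonempty p c ε X Y) (costSet_finite p c ε X Y)

lemma sInf_costSet_nonneg {p c ε : ℝ} (hc : 0 < c) (hε : 0 < ε) (X Y : GraphNA) :
    0 ≤ sInf (costSet p c ε X Y) := by
  obtain ⟨W, hW, hv⟩ := sInf_costSet_mem p c ε X Y
  rw [hv]
  exact cost_nonneg hc hε hW

lemma sInf_costSet_le {p c ε : ℝ} {X Y : GraphNA} {v : ℝ}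
    (hv : v ∈ costSet p c ε X Y) : sInf (costSet p c ε X Y) ≤ v :=
  csInf_le (costSet_finite p c ε X Y).bddBelow hv

end CostSet
section Transport

/-- Extend an equivalence of `Fin m ≃ Fin n` to `Fin (m+1) ≃ Fin (n+1)`
fixing the last elements. -/
def extE {m n : ℕ} (g : Fin m ≃ Fin n) : Fin (m+1) ≃ Fin (n+1) :=
  finSuccEquivLast.trans (g.optionCongr.trans finSuccEquivLast.symm)

lemma extE_castSucc {m n : ℕ} (g : Fin m ≃ Fin n) (i : Fin m) :
    extE g i.castSucc = (g i).castSucc := by simp [extE]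

lemma extE_last {m n : ℕ} (g : Fin m ≃ Fin n) :
    extE g (Fin.last m) = Fin.last n := by simp [extE]

lemma costSet_subset_of_iso {p c ε : ℝ} {X X' Y Y' : GraphNA}
    (hX : Isomorphic X X') (hY : Isomorphic Y Y') :
    costSet p c ε X Y ⊆ costSet p c ε X' Y' := by
  obtain ⟨gX, hgX⟩ := (isomorphic_iff_equiv X X').1 hX
  obtain ⟨gY, hgY⟩ := (isomorphic_iff_equiv Y Y').1 hY
  rintro v ⟨W, ⟨h01, hcol, hrow, hcor⟩, rfl⟩
  set W₂ : Matrix (Fin (X'.n+1)) (Fin (Y'.n+1)) ℝ :=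
    fun i j => W (extE gX.symm i) (extE gY.symm j) with hW₂
  have htop : ∀ i j, topLeft W₂ i j = topLeft W (gX.symm i) (gY.symm j) := by
    intro i j
    simp only [topLeft, hW₂, extE_castSucc]
  refine ⟨W₂, ⟨fun i j => h01 _ _, fun j => ?_, fun i => ?_, ?_⟩, ?_⟩
  · rw [Fintype.sum_equiv (extE gX.symm)
      (fun i => W₂ i j.castSucc) (fun i => W i ((gY.symm j).castSucc))
      (fun i => by simp only [hW₂, extE_castSucc])]
    exact hcol (gY.symm j)
  · rw [Fintype.sum_equiv (extE gY.symm)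
      (fun j => W₂ i.castSucc j) (fun j => W ((gX.symm i).castSucc) j)
      (fun j => by simp only [hW₂, extE_castSucc])]
    exact hrow (gX.symm i)
  · simp only [hW₂, extE_last]; exact hcor
  · congr 1
    · unfold missFalseCost
      congr 1
      rw [Fintype.sum_equiv gX.symm
        (fun i : Fin X'.n => W₂ i.castSucc (Fin.last Y'.n))
        (fun i : Fin X.n => W i.castSucc (Fin.last Y.n))
        (fun i => by simp only [hW₂, extE_castSucc, extE_last])]
      rw [Fintype.sum_equiv gY.symm
        (fun j : Fin Y'.n => W₂ (Fin.last X'.n) j.castSucc)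
        (fun j : Fin Y.n => W (Fin.last X.n) j.castSucc)
        (fun j => by simp only [hW₂, extE_castSucc, extE_last])]
    · unfold edgeCost
      congr 1
      have hkey : X'.A * topLeft W₂ - topLeft W₂ * Y'.A =
          fun i j => (X.A * topLeft W - topLeft W * Y.A) (gX.symm i) (gY.symm j) := by
        ext i j
        have e1 : (X'.A * topLeft W₂) i j = (X.A * topLeft W) (gX.symm i) (gY.symm j) := by
          rw [Matrix.mul_apply, Matrix.mul_apply]
          refine Fintype.sum_equiv gX.symm
            (fun k => X'.A i k * topLeft W₂ k j)
            (fun k => X.A (gX.symm i) k * topLeft W k (gY.symm j)) fun k => ?_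
          rw [htop]
          congr 1
          rw [hgX (gX.symm i) (gX.symm k)]
          simp
        have e2 : (topLeft W₂ * Y'.A) i j = (topLeft W * Y.A) (gX.symm i) (gY.symm j) := by
          rw [Matrix.mul_apply, Matrix.mul_apply]
          refine Fintype.sum_equiv gY.symm
            (fun k => topLeft W₂ i k * Y'.A k j)
            (fun k => topLeft W (gX.symm i) k * Y.A k (gY.symm j)) fun k => ?_
          rw [htop]
          congr 1
          rw [hgY (gY.symm k) (gY.symm j)]
          simp
        simp only [Matrix.sub_apply, e1, e2]
      rw [hkey, onorm_reindex gX.symm gY.symm]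

lemma costSet_symm_subset (p c ε : ℝ) (X Y : GraphNA) :
    costSet p c ε X Y ⊆ costSet p c ε Y X := by
  rintro v ⟨W, ⟨h01, hcol, hrow, hcor⟩, rfl⟩
  set V : Matrix (Fin (Y.n+1)) (Fin (X.n+1)) ℝ := fun i j => W j i with hV
  refine ⟨V, ⟨fun i j => h01 _ _, fun j => hrow j, fun i => hcol i, hcor⟩, ?_⟩
  congr 1
  · unfold missFalseCost
    rw [add_comm]
  · unfold edgeCost
    congr 1
    have hVtop : topLeft V = (topLeft W)ᵀ := rfl
    have hkey : Y.A * topLeft V - topLeft V * X.A =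
        -((X.A * topLeft W - topLeft W * Y.A)ᵀ) := by
      rw [Matrix.transpose_sub, Matrix.transpose_mul, Matrix.transpose_mul,
        X.A_symm, Y.A_symm, neg_sub, hVtop]
    rw [hkey, onorm_neg, onorm_transpose]

lemma sInf_costSet_symm (p c ε : ℝ) (X Y : GraphNA) :
    sInf (costSet p c ε X Y) = sInf (costSet p c ε Y X) := by
  apply le_antisymm <;>
    exact csInf_le_csInf (Set.Finite.bddBelow (costSet_finite _ _ _ _ _))
      (costSet_nonempty _ _ _ _ _) (costSet_symm_subset _ _ _ _ _)

lemma sInf_costSet_congr {p c ε : ℝ} {X X' Y Y' : GraphNA}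
    (hX : Isomorphic X X') (hY : Isomorphic Y Y') :
    sInf (costSet p c ε X Y) = sInf (costSet p c ε X' Y') := by
  apply le_antisymm
  · exact csInf_le_csInf (Set.Finite.bddBelow (costSet_finite _ _ _ _ _))
      (costSet_nonempty _ _ _ _ _)
      (costSet_subset_of_iso (isomorphic_symm hX) (isomorphic_symm hY))
  · exact csInf_le_csInf (Set.Finite.bddBelow (costSet_finite _ _ _ _ _))
      (costSet_nonempty _ _ _ _ _) (costSet_subset_of_iso hX hY)

end Transport
section Identity

lemma sInf_costSet_eq_zero_of_iso {p c ε : ℝ} {X Y : GraphNA} (hc : 0 < c)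
    (hε : 0 < ε) (h : Isomorphic X Y) : sInf (costSet p c ε X Y) = 0 := by
  obtain ⟨g, hg⟩ := (isomorphic_iff_equiv X Y).1 h
  set W : Matrix (Fin (X.n+1)) (Fin (Y.n+1)) ℝ :=
    fun i j => if extE g i = j ∧ i ≠ Fin.last X.n then 1 else 0 with hWdef
  have hWmem : W ∈ Wset X.n Y.n := by
    refine ⟨fun i j => ?_, fun j => ?_, fun i => ?_, ?_⟩
    · by_cases h' : extE g i = j ∧ i ≠ Fin.last X.n <;> simp [hWdef, h']
    · rw [Finset.sum_eq_single ((g.symm j).castSucc)]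
      · have h1 : extE g ((g.symm j).castSucc) = j.castSucc := by
          rw [extE_castSucc, Equiv.apply_symm_apply]
        have h2 : (g.symm j).castSucc ≠ Fin.last X.n := (Fin.castSucc_lt_last _).ne
        simp [hWdef, h1, h2]
      · intro b _ hb
        rw [hWdef]
        dsimp only
        rw [if_neg]
        rintro ⟨hb1, -⟩
        apply hb
        have : extE g b = extE g ((g.symm j).castSucc) := by
          rw [hb1, extE_castSucc, Equiv.apply_symm_apply]
        exact (extE g).injective this
      · simp
    · rw [Finset.sum_eq_single ((g i).castSucc)]
      · have h1 : extE g i.castSucc = (g i).castSucc := extE_castSucc g i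
        have h2 : i.castSucc ≠ Fin.last X.n := (Fin.castSucc_lt_last _).ne
        simp [hWdef, h1, h2]
      · intro b _ hb
        rw [hWdef]
        dsimp only
        rw [if_neg]
        rintro ⟨hb1, -⟩
        exact hb (by rw [← hb1, extE_castSucc])
      · simp
    · simp [hWdef]
  have htop : ∀ i j, topLeft W i j = if g i = j then 1 else 0 := by
    intro i j
    have h2 : i.castSucc ≠ Fin.last X.n := (Fin.castSucc_lt_last _).ne
    simp only [topLeft, hWdef, extE_castSucc, h2, ne_eq, not_false_eq_true, and_true,
      Fin.castSucc_inj]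
  have hmiss : missFalseCost p c X Y W = 0 := by
    unfold missFalseCost
    have h1 : ∀ i : Fin X.n, W i.castSucc (Fin.last Y.n) = 0 := by
      intro i
      rw [hWdef]
      dsimp only
      rw [if_neg]
      rintro ⟨hb1, -⟩
      exact (Fin.castSucc_lt_last (g i)).ne (by rw [← extE_castSucc g i, hb1])
    have h2 : ∀ j : Fin Y.n, W (Fin.last X.n) j.castSucc = 0 := by
      intro j
      rw [hWdef]
      dsimp only
      rw [if_neg]
      rintro ⟨-, hb2⟩
      exact hb2 rfl
    rw [Finset.sum_eq_zero (fun i _ => h1 i), Finset.sum_eq_zero (fun j _ => h2 j)]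
    ring
  have hedge : edgeCost p ε X Y W = 0 := by
    unfold edgeCost
    have : X.A * topLeft W - topLeft W * Y.A = 0 := by
      ext i j
      have e1 : (X.A * topLeft W) i j = X.A i (g.symm j) := by
        rw [Matrix.mul_apply, Finset.sum_eq_single (g.symm j)]
        · rw [htop, if_pos (Equiv.apply_symm_apply g j), mul_one]
        · intro b _ hb
          rw [htop, if_neg (fun h' => hb (by rw [← h', Equiv.symm_apply_apply])), mul_zero]
        · simp
      have e2 : (topLeft W * Y.A) i j = Y.A (g i) j := by
        rw [Matrix.mul_apply, Finset.sum_eq_single (g i)]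
        · rw [htop, if_pos rfl, one_mul]
        · intro b _ hb
          rw [htop, if_neg (fun h' => hb h'.symm), zero_mul]
        · simp
      have e3 : X.A i (g.symm j) = Y.A (g i) j := by
        rw [hg i (g.symm j), Equiv.apply_symm_apply]
      simp [e1, e2, e3]
    rw [this]
    have : onorm (0 : Matrix (Fin X.n) (Fin Y.n) ℝ) = 0 := by
      unfold onorm; simp
    rw [this, mul_zero]
  have hzero : (0:ℝ) ∈ costSet p c ε X Y := ⟨W, hWmem, by rw [hmiss, hedge]; ring⟩
  exact le_antisymm (sInf_costSet_le hzero) (sInf_costSet_nonneg hc hε X Y)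

lemma iso_of_sInf_costSet_eq_zero {p c ε : ℝ} {X Y : GraphNA} (hc : 0 < c)
    (hε : 0 < ε) (h : sInf (costSet p c ε X Y) = 0) : Isomorphic X Y := by
  obtain ⟨W, hW, hv⟩ := sInf_costSet_mem p c ε X Y
  obtain ⟨h01, hcol, hrow, hcor⟩ := hW
  rw [h] at hv
  have hmiss_nonneg : 0 ≤ missFalseCost p c X Y W := by
    unfold missFalseCost
    have : (0:ℝ) ≤ c ^ p / 2 := by positivity
    exact mul_nonneg this (add_nonneg
      (Finset.sum_nonneg fun i _ => Wset_entry_nonneg ⟨h01, hcol, hrow, hcor⟩ _ _)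
      (Finset.sum_nonneg fun j _ => Wset_entry_nonneg ⟨h01, hcol, hrow, hcor⟩ _ _))
  have hedge_nonneg : 0 ≤ edgeCost p ε X Y W := by
    unfold edgeCost
    have : (0:ℝ) ≤ ε ^ p / 2 := by positivity
    exact mul_nonneg this (onorm_nonneg _)
  have hmiss : missFalseCost p c X Y W = 0 := by linarith
  have hedge : edgeCost p ε X Y W = 0 := by linarith
  -- extract vanishing of the last column and row
  have hcp : (0:ℝ) < c ^ p / 2 := by
    have := Real.rpow_pos_of_pos hc p; linarith
  have hsums : (∑ i : Fin X.n, W i.castSucc (Fin.last Y.n)) +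
      (∑ j : Fin Y.n, W (Fin.last X.n) j.castSucc) = 0 := by
    unfold missFalseCost at hmiss
    rcases mul_eq_zero.1 hmiss with h' | h'
    · exact absurd h' hcp.ne'
    · exact h'
  have hsum1 : ∀ i : Fin X.n, W i.castSucc (Fin.last Y.n) = 0 := by
    have hs1 : (∑ i : Fin X.n, W i.castSucc (Fin.last Y.n)) = 0 := by
      have h1 := Finset.sum_nonneg fun (i : Fin X.n) (_ : i ∈ Finset.univ) =>
        Wset_entry_nonneg ⟨h01, hcol, hrow, hcor⟩ i.castSucc (Fin.last Y.n)
      have h2 := Finset.sum_nonneg fun (j : Fin Y.n) (_ : j ∈ Finset.univ) =>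
        Wset_entry_nonneg ⟨h01, hcol, hrow, hcor⟩ (Fin.last X.n) j.castSucc
      linarith
    intro i
    exact (Finset.sum_eq_zero_iff_of_nonneg fun i _ =>
      Wset_entry_nonneg ⟨h01, hcol, hrow, hcor⟩ _ _).1 hs1 i (Finset.mem_univ i)
  have hsum2 : ∀ j : Fin Y.n, W (Fin.last X.n) j.castSucc = 0 := by
    have hs2 : (∑ j : Fin Y.n, W (Fin.last X.n) j.castSucc) = 0 := by
      have h1 := Finset.sum_nonneg fun (i : Fin X.n) (_ : i ∈ Finset.univ) =>
        Wset_entry_nonneg ⟨h01, hcol, hrow, hcor⟩ i.castSucc (Fin.last Y.n)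
      have h2 := Finset.sum_nonneg fun (j : Fin Y.n) (_ : j ∈ Finset.univ) =>
        Wset_entry_nonneg ⟨h01, hcol, hrow, hcor⟩ (Fin.last X.n) j.castSucc
      linarith
    intro j
    exact (Finset.sum_eq_zero_iff_of_nonneg fun j _ =>
      Wset_entry_nonneg ⟨h01, hcol, hrow, hcor⟩ _ _).1 hs2 j (Finset.mem_univ j)
  -- the top-left block is doubly stochastic
  have hMrow : ∀ i : Fin X.n, ∑ j : Fin Y.n, topLeft W i j = 1 := by
    intro i
    have := hrow i
    rw [Fin.sum_univ_castSucc] at this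
    rw [hsum1 i, add_zero] at this
    exact this
  have hMcol : ∀ j : Fin Y.n, ∑ i : Fin X.n, topLeft W i j = 1 := by
    intro j
    have := hcol j
    rw [Fin.sum_univ_castSucc] at this
    rw [hsum2 j, add_zero] at this
    exact this
  obtain ⟨g, hgind⟩ := exists_equiv_of_doubly (M := topLeft W) (fun i j => h01 _ _) hMrow hMcol
  -- the edge condition
  have hep : (0:ℝ) < ε ^ p / 2 := by
    have := Real.rpow_pos_of_pos hε p; linarith
  have honorm : onorm (X.A * topLeft W - topLeft W * Y.A) = 0 := by
    unfold edgeCost at hedge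
    rcases mul_eq_zero.1 hedge with h' | h'
    · exact absurd h' hep.ne'
    · exact h'
  have hAM : X.A * topLeft W = topLeft W * Y.A := sub_eq_zero.1 (onorm_eq_zero honorm)
  refine (isomorphic_iff_equiv X Y).2 ⟨g, fun i j => ?_⟩
  have e1 : (X.A * topLeft W) i (g j) = X.A i j := by
    rw [Matrix.mul_apply, Finset.sum_eq_single j]
    · rw [hgind, if_pos rfl, mul_one]
    · intro b _ hb
      rw [hgind, if_neg (fun h' => hb (g.injective h')), mul_zero]
    · simp
  have e2 : (topLeft W * Y.A) i (g j) = Y.A (g i) (g j) := by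
    rw [Matrix.mul_apply, Finset.sum_eq_single (g i)]
    · rw [hgind, if_pos rfl, one_mul]
    · intro b _ hb
      rw [hgind, if_neg (fun h' => hb h'.symm), zero_mul]
    · simp
  rw [← e1, hAM, e2]

end Identity
section Triangle

lemma real_rpow_add_le {a b q : ℝ} (ha : 0 ≤ a) (hb : 0 ≤ b) (h0 : 0 ≤ q)
    (h1 : q ≤ 1) : (a + b) ^ q ≤ a ^ q + b ^ q := by
  lift a to NNReal using ha
  lift b to NNReal using hb
  rw [← NNReal.coe_add, ← NNReal.coe_rpow, ← NNReal.coe_rpow, ← NNReal.coe_rpow,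
    ← NNReal.coe_add, NNReal.coe_le_coe]
  exact NNReal.rpow_add_le_add_rpow a b h0 h1

lemma sInf_costSet_triangle {p c ε : ℝ} (hc : 0 < c) (hε : 0 < ε)
    (X Z Y : GraphNA) :
    sInf (costSet p c ε X Y) ≤
      sInf (costSet p c ε X Z) + sInf (costSet p c ε Z Y) := by
  obtain ⟨W1, hW1, hv1⟩ := sInf_costSet_mem p c ε X Z
  obtain ⟨W2, hW2, hv2⟩ := sInf_costSet_mem p c ε Z Y
  obtain ⟨h011, hcol1, hrow1, hcor1⟩ := hW1
  obtain ⟨h012, hcol2, hrow2, hcor2⟩ := hW2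
  have hW1n : ∀ i j, 0 ≤ W1 i j := Wset_entry_nonneg ⟨h011, hcol1, hrow1, hcor1⟩
  have hW2n : ∀ i j, 0 ≤ W2 i j := Wset_entry_nonneg ⟨h012, hcol2, hrow2, hcor2⟩
  set W : Matrix (Fin (X.n+1)) (Fin (Y.n+1)) ℝ :=
    fun i j =>
      if i = Fin.last X.n ∧ j = Fin.last Y.n then 0
      else (∑ k : Fin Z.n, W1 i k.castSucc * W2 k.castSucc j)
        + (if j = Fin.last Y.n then W1 i (Fin.last Z.n) else 0)
        + (if i = Fin.last X.n then W2 (Fin.last Z.n) j else 0) with hWdef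
  -- entry value lemmas
  have hval_top : ∀ (i : Fin X.n) (j : Fin Y.n), W i.castSucc j.castSucc =
      ∑ k : Fin Z.n, W1 i.castSucc k.castSucc * W2 k.castSucc j.castSucc := by
    intro i j
    have h1 : i.castSucc ≠ Fin.last X.n := (Fin.castSucc_lt_last _).ne
    have h2 : j.castSucc ≠ Fin.last Y.n := (Fin.castSucc_lt_last _).ne
    simp [hWdef, h1, h2]
  have hval_lastcol : ∀ i : Fin X.n, W i.castSucc (Fin.last Y.n) =
      (∑ k : Fin Z.n, W1 i.castSucc k.castSucc * W2 k.castSucc (Fin.last Y.n))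
        + W1 i.castSucc (Fin.last Z.n) := by
    intro i
    have h1 : i.castSucc ≠ Fin.last X.n := (Fin.castSucc_lt_last _).ne
    simp [hWdef, h1]
  have hval_lastrow : ∀ j : Fin Y.n, W (Fin.last X.n) j.castSucc =
      (∑ k : Fin Z.n, W1 (Fin.last X.n) k.castSucc * W2 k.castSucc j.castSucc)
        + W2 (Fin.last Z.n) j.castSucc := by
    intro j
    have h2 : j.castSucc ≠ Fin.last Y.n := (Fin.castSucc_lt_last _).ne
    simp [hWdef, h2, add_assoc]
  have hval_corner : W (Fin.last X.n) (Fin.last Y.n) = 0 := by simp [hWdef]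
  -- membership
  have hbin : ∀ i j, W i j = 0 ∨ W i j = 1 := by
    intro i j
    rcases Fin.eq_castSucc_or_eq_last i with ⟨i', rfl⟩ | rfl
    · -- use the unique 1 in row i' of W1
      obtain ⟨k₀, hk1, hk0⟩ := binary_row (fun k => h011 i'.castSucc k) (hrow1 i')
      rcases Fin.eq_castSucc_or_eq_last k₀ with ⟨k', rfl⟩ | rfl
      · have hS : (∑ k : Fin Z.n, W1 i'.castSucc k.castSucc * W2 k.castSucc j) =
            W2 k'.castSucc j := by
          rw [Finset.sum_eq_single k']
          · rw [hk1, one_mul]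
          · intro b _ hb
            rw [hk0 b.castSucc (by simpa [Fin.castSucc_inj] using hb), zero_mul]
          · simp
        have hlast : W1 i'.castSucc (Fin.last Z.n) = 0 :=
          hk0 _ (Fin.castSucc_lt_last k').ne'
        rcases Fin.eq_castSucc_or_eq_last j with ⟨j', rfl⟩ | rfl
        · rw [hval_top, hS]; exact h012 _ _
        · rw [hval_lastcol, hS, hlast, add_zero]; exact h012 _ _
      · have hS : ∀ jj, (∑ k : Fin Z.n, W1 i'.castSucc k.castSucc * W2 k.castSucc jj)
            = 0 := by
          intro jj
          refine Finset.sum_eq_zero fun k _ => ?_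
          rw [hk0 k.castSucc (Fin.castSucc_lt_last k).ne, zero_mul]
        rcases Fin.eq_castSucc_or_eq_last j with ⟨j', rfl⟩ | rfl
        · rw [hval_top, hS]; left; rfl
        · rw [hval_lastcol, hS, zero_add]; right; exact hk1
    · rcases Fin.eq_castSucc_or_eq_last j with ⟨j', rfl⟩ | rfl
      · -- use the unique 1 in column j' of W2
        obtain ⟨k₀, hk1, hk0⟩ := binary_row (fun k => h012 k j'.castSucc) (hcol2 j')
        rcases Fin.eq_castSucc_or_eq_last k₀ with ⟨k', rfl⟩ | rfl
        · have hS : (∑ k : Fin Z.n, W1 (Fin.last X.n) k.castSucc * W2 k.castSucc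
              j'.castSucc) = W1 (Fin.last X.n) k'.castSucc := by
            rw [Finset.sum_eq_single k']
            · rw [hk1, mul_one]
            · intro b _ hb
              rw [hk0 b.castSucc (by simpa [Fin.castSucc_inj] using hb), mul_zero]
            · simp
          have hlast : W2 (Fin.last Z.n) j'.castSucc = 0 :=
            hk0 _ (Fin.castSucc_lt_last k').ne'
          rw [hval_lastrow, hS, hlast, add_zero]; exact h011 _ _
        · have hS : (∑ k : Fin Z.n, W1 (Fin.last X.n) k.castSucc * W2 k.castSucc
              j'.castSucc) = 0 := by
            refine Finset.sum_eq_zero fun k _ => ?_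
            rw [hk0 k.castSucc (Fin.castSucc_lt_last k).ne, mul_zero]
          rw [hval_lastrow, hS, zero_add]; right; exact hk1
      · rw [hval_corner]; left; rfl
  have hcolW : ∀ j : Fin Y.n, ∑ i, W i j.castSucc = 1 := by
    intro j
    rw [Fin.sum_univ_castSucc (f := fun i => W i j.castSucc)]
    rw [Finset.sum_congr rfl (fun i _ => hval_top i j), hval_lastrow j]
    have h1 : (∑ i : Fin X.n, ∑ k : Fin Z.n,
          W1 i.castSucc k.castSucc * W2 k.castSucc j.castSucc)
        + (∑ k : Fin Z.n, W1 (Fin.last X.n) k.castSucc * W2 k.castSucc j.castSucc)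
        = ∑ k : Fin Z.n, W2 k.castSucc j.castSucc := by
      rw [← Fin.sum_univ_castSucc
        (f := fun i => ∑ k : Fin Z.n, W1 i k.castSucc * W2 k.castSucc j.castSucc)]
      rw [Finset.sum_comm]
      refine Finset.sum_congr rfl fun k _ => ?_
      rw [← Finset.sum_mul, hcol1 k, one_mul]
    have h2 : (∑ k : Fin Z.n, W2 k.castSucc j.castSucc)
        + W2 (Fin.last Z.n) j.castSucc = 1 := by
      rw [← Fin.sum_univ_castSucc (f := fun k => W2 k j.castSucc)]
      exact hcol2 j
    linarith
  have hrowW : ∀ i : Fin X.n, ∑ j, W i.castSucc j = 1 := by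
    intro i
    rw [Fin.sum_univ_castSucc (f := fun j => W i.castSucc j)]
    rw [Finset.sum_congr rfl (fun j _ => hval_top i j), hval_lastcol i]
    have h1 : (∑ j : Fin Y.n, ∑ k : Fin Z.n,
          W1 i.castSucc k.castSucc * W2 k.castSucc j.castSucc)
        + (∑ k : Fin Z.n, W1 i.castSucc k.castSucc * W2 k.castSucc (Fin.last Y.n))
        = ∑ k : Fin Z.n, W1 i.castSucc k.castSucc := by
      rw [Finset.sum_comm, ← Finset.sum_add_distrib]
      refine Finset.sum_congr rfl fun k _ => ?_
      rw [← Finset.mul_sum, ← mul_add,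
        ← Fin.sum_univ_castSucc (f := fun j => W2 k.castSucc j), hrow2 k, mul_one]
    have h2 : (∑ k : Fin Z.n, W1 i.castSucc k.castSucc)
        + W1 i.castSucc (Fin.last Z.n) = 1 := by
      rw [← Fin.sum_univ_castSucc (f := fun k => W1 i.castSucc k)]
      exact hrow1 i
    linarith
  have hWmem : W ∈ Wset X.n Y.n := ⟨hbin, hcolW, hrowW, hval_corner⟩
  -- cost bounds
  have hmiss_le : missFalseCost p c X Y W ≤
      missFalseCost p c X Z W1 + missFalseCost p c Z Y W2 := by
    unfold missFalseCost
    have hb1 : (∑ i : Fin X.n, W i.castSucc (Fin.last Y.n)) ≤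
        (∑ i : Fin X.n, W1 i.castSucc (Fin.last Z.n)) +
        (∑ k : Fin Z.n, W2 k.castSucc (Fin.last Y.n)) := by
      have e : ∑ i : Fin X.n, W i.castSucc (Fin.last Y.n)
          = (∑ i : Fin X.n, ∑ k : Fin Z.n,
              W1 i.castSucc k.castSucc * W2 k.castSucc (Fin.last Y.n))
            + ∑ i : Fin X.n, W1 i.castSucc (Fin.last Z.n) := by
        rw [Finset.sum_congr rfl (fun i _ => hval_lastcol i), Finset.sum_add_distrib]
      rw [e]
      have hle : (∑ i : Fin X.n, ∑ k : Fin Z.n,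
            W1 i.castSucc k.castSucc * W2 k.castSucc (Fin.last Y.n))
          ≤ ∑ k : Fin Z.n, W2 k.castSucc (Fin.last Y.n) := by
        rw [Finset.sum_comm]
        refine Finset.sum_le_sum fun k _ => ?_
        rw [← Finset.sum_mul]
        have h1 : (∑ i : Fin X.n, W1 i.castSucc k.castSucc) ≤ 1 := by
          have ha := hcol1 k
          rw [Fin.sum_univ_castSucc (f := fun i => W1 i k.castSucc)] at ha
          have hb := hW1n (Fin.last X.n) k.castSucc
          linarith
        calc (∑ i : Fin X.n, W1 i.castSucc k.castSucc) * W2 k.castSucc (Fin.last Y.n)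
            ≤ 1 * W2 k.castSucc (Fin.last Y.n) :=
              mul_le_mul_of_nonneg_right h1 (hW2n _ _)
          _ = _ := one_mul _
      linarith
    have hb2 : (∑ j : Fin Y.n, W (Fin.last X.n) j.castSucc) ≤
        (∑ k : Fin Z.n, W1 (Fin.last X.n) k.castSucc) +
        (∑ j : Fin Y.n, W2 (Fin.last Z.n) j.castSucc) := by
      have e : ∑ j : Fin Y.n, W (Fin.last X.n) j.castSucc
          = (∑ j : Fin Y.n, ∑ k : Fin Z.n,
              W1 (Fin.last X.n) k.castSucc * W2 k.castSucc j.castSucc)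
            + ∑ j : Fin Y.n, W2 (Fin.last Z.n) j.castSucc := by
        rw [Finset.sum_congr rfl (fun j _ => hval_lastrow j), Finset.sum_add_distrib]
      rw [e]
      have hle : (∑ j : Fin Y.n, ∑ k : Fin Z.n,
            W1 (Fin.last X.n) k.castSucc * W2 k.castSucc j.castSucc)
          ≤ ∑ k : Fin Z.n, W1 (Fin.last X.n) k.castSucc := by
        rw [Finset.sum_comm]
        refine Finset.sum_le_sum fun k _ => ?_
        rw [← Finset.mul_sum]
        have h1 : (∑ j : Fin Y.n, W2 k.castSucc j.castSucc) ≤ 1 := by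
          have ha := hrow2 k
          rw [Fin.sum_univ_castSucc (f := fun j => W2 k.castSucc j)] at ha
          have hb := hW2n k.castSucc (Fin.last Y.n)
          linarith
        calc W1 (Fin.last X.n) k.castSucc * (∑ j : Fin Y.n, W2 k.castSucc j.castSucc)
            ≤ W1 (Fin.last X.n) k.castSucc * 1 :=
              mul_le_mul_of_nonneg_left h1 (hW1n _ _)
          _ = _ := mul_one _
      linarith
    have hcp : (0:ℝ) ≤ c ^ p / 2 := by positivity
    rw [← mul_add]
    refine mul_le_mul_of_nonneg_left ?_ hcp
    linarith
  have htopW : topLeft W = topLeft W1 * topLeft W2 := by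
    ext i j
    rw [Matrix.mul_apply]
    exact hval_top i j
  have hedge_le : edgeCost p ε X Y W ≤ edgeCost p ε X Z W1 + edgeCost p ε Z Y W2 := by
    unfold edgeCost
    rw [htopW]
    have hdecomp : X.A * (topLeft W1 * topLeft W2) - (topLeft W1 * topLeft W2) * Y.A
        = (X.A * topLeft W1 - topLeft W1 * Z.A) * topLeft W2
          + topLeft W1 * (Z.A * topLeft W2 - topLeft W2 * Y.A) := by
      rw [Matrix.sub_mul, Matrix.mul_sub]
      rw [Matrix.mul_assoc, Matrix.mul_assoc, Matrix.mul_assoc]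
      abel
    rw [hdecomp]
    have h1 : onorm ((X.A * topLeft W1 - topLeft W1 * Z.A) * topLeft W2
          + topLeft W1 * (Z.A * topLeft W2 - topLeft W2 * Y.A))
        ≤ onorm (X.A * topLeft W1 - topLeft W1 * Z.A)
          + onorm (Z.A * topLeft W2 - topLeft W2 * Y.A) := by
      refine (onorm_add_le _ _).trans (add_le_add ?_ ?_)
      · refine onorm_mul_le_right _ _ (fun i j => hW2n _ _) fun k => ?_
        have ha := hrow2 k
        rw [Fin.sum_univ_castSucc (f := fun j => W2 k.castSucc j)] at ha
        have hb := hW2n k.castSucc (Fin.last Y.n)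
        simp only [topLeft]
        linarith
      · refine onorm_mul_le_left _ _ (fun i j => hW1n _ _) fun k => ?_
        have ha := hcol1 k
        rw [Fin.sum_univ_castSucc (f := fun i => W1 i k.castSucc)] at ha
        have hb := hW1n (Fin.last X.n) k.castSucc
        simp only [topLeft]
        linarith
    have hep : (0:ℝ) ≤ ε ^ p / 2 := by positivity
    calc ε ^ p / 2 * onorm ((X.A * topLeft W1 - topLeft W1 * Z.A) * topLeft W2
          + topLeft W1 * (Z.A * topLeft W2 - topLeft W2 * Y.A))
        ≤ ε ^ p / 2 * (onorm (X.A * topLeft W1 - topLeft W1 * Z.A)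
          + onorm (Z.A * topLeft W2 - topLeft W2 * Y.A)) :=
          mul_le_mul_of_nonneg_left h1 hep
      _ = _ := by ring
  have hvmem : missFalseCost p c X Y W + edgeCost p ε X Y W ∈ costSet p c ε X Y :=
    ⟨W, hWmem, rfl⟩
  have hle := sInf_costSet_le hvmem
  rw [hv1, hv2]
  linarith

end Triangle
/-- The function `ρ̃^{(c,ε)}([X],[Y]) := d̃^{(c,ε)}(X,Y)` on the
quotient of the space of graphs (without node attributes) by graph isomorphism is
well defined — independent of the choice of representatives of the isomorphism
classes — and is a metric on this quotient space: it satisfies identity (it vanishes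
precisely on pairs of isomorphic graphs, i.e. precisely when `[X] = [Y]`), symmetry,
and the triangle inequality. -/
theorem dtilde_metric_on_quotient (p c ε : ℝ) (hp : 1 ≤ p) (hc : 0 < c)
    (hε : 0 < ε) :
    (∀ X X' Y Y' : GraphNA, Isomorphic X X' → Isomorphic Y Y' →
      dtilde p c ε X Y = dtilde p c ε X' Y') ∧
    (∀ X Y : GraphNA, dtilde p c ε X Y = 0 ↔ Isomorphic X Y) ∧
    (∀ X Y : GraphNA, dtilde p c ε X Y = dtilde p c ε Y X) ∧
    (∀ X Y Z : GraphNA,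
      dtilde p c ε X Y ≤ dtilde p c ε X Z + dtilde p c ε Z Y) := by
  have hp0 : (0:ℝ) < p := lt_of_lt_of_le one_pos hp
  have hq0 : (0:ℝ) < 1/p := by positivity
  have hq1 : 1/p ≤ 1 := by rw [div_le_one hp0]; linarith
  refine ⟨?_, ?_, ?_, ?_⟩
  · intro X X' Y Y' hX hY
    rw [dtilde_eq, dtilde_eq, sInf_costSet_congr hX hY]
  · intro X Y
    rw [dtilde_eq]
    rw [Real.rpow_eq_zero (sInf_costSet_nonneg hc hε X Y) hq0.ne']
    exact ⟨fun h => iso_of_sInf_costSet_eq_zero hc hε h,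
      fun h => sInf_costSet_eq_zero_of_iso hc hε h⟩
  · intro X Y
    rw [dtilde_eq, dtilde_eq, sInf_costSet_symm]
  · intro X Y Z
    rw [dtilde_eq, dtilde_eq, dtilde_eq]
    have ha := sInf_costSet_nonneg (p := p) hc hε X Z
    have hb := sInf_costSet_nonneg (p := p) hc hε Z Y
    have htri := sInf_costSet_triangle (p := p) hc hε X Z Y
    calc sInf (costSet p c ε X Y) ^ (1/p)
        ≤ (sInf (costSet p c ε X Z) + sInf (costSet p c ε Z Y)) ^ (1/p) :=
          Real.rpow_le_rpow (sInf_costSet_nonneg hc hε X Y) htri hq0.le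
      _ ≤ _ := real_rpow_add_le ha hb hq0.le hq1

end GraphGOSPA
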